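/- In the modified AKV model, Z maps Im|Z| ∩ {ψ, Z*ψ'}^⊥ into ran P_3 ∩ {ψ', Zψ}^⊥, Z* maps ran P_3 ∩ {ψ', Zψ}^⊥ into Im|Z| ∩ {ψ, Z*ψ'}^⊥, these two restrictions are mutually inverse and preserve inner products (hence are unitaries between the two subspaces); consequently dim(Im|Z| ∩ {ψ, Z*ψ'}^⊥) = dim(ran P_3 ∩ {ψ', Zψ}^⊥). -/

import Mathlib

noncomputable section

open ContinuousLinearMap Finset
open scoped InnerProductSpace

/-- The Hilbert space ℂ^(N+M+1) of the modified AKV model. -/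
abbrev AKVSpace (N M : ℕ) := EuclideanSpace ℂ (Fin (N + M + 1))

namespace AKV

variable (N M : ℕ)

/-- standard basis vector -/
def ket (i : Fin (N + M + 1)) : AKVSpace N M := EuclideanSpace.single i 1

/-- rank-one operator |u⟩⟨v| : x ↦ ⟪v, x⟫ • u -/
def ketbra (u v : AKVSpace N M) : AKVSpace N M →L[ℂ] AKVSpace N M :=
  (innerSL ℂ v).smulRight u

/-- indices 2,…,N of the second level -/
def idx2 : Finset (Fin (N + M + 1)) := univ.filter fun i => 2 ≤ (i : ℕ) ∧ (i : ℕ) ≤ N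
/-- indices N+1,…,N+M of the third level -/
def idx3 : Finset (Fin (N + M + 1)) := univ.filter fun i => N + 1 ≤ (i : ℕ)

/-- orthogonal projection onto span{e_0} -/
def P0 : AKVSpace N M →L[ℂ] AKVSpace N M := ketbra N M (ket N M 0) (ket N M 0)
/-- orthogonal projection onto span{e_1} -/
def P1 : AKVSpace N M →L[ℂ] AKVSpace N M := ketbra N M (ket N M 1) (ket N M 1)
/-- orthogonal projection onto span{e_2,…,e_N} -/
def P2 : AKVSpace N M →L[ℂ] AKVSpace N M := ∑ i ∈ idx2 N M, ketbra N M (ket N M i) (ket N M i)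
/-- orthogonal projection onto span{e_{N+1},…,e_{N+M}} -/
def P3 : AKVSpace N M →L[ℂ] AKVSpace N M := ∑ i ∈ idx3 N M, ketbra N M (ket N M i) (ket N M i)

/-- ψ = e_2 + ⋯ + e_N -/
def psi : AKVSpace N M := ∑ i ∈ idx2 N M, ket N M i
/-- ψ' = e_{N+1} + ⋯ + e_{N+M} -/
def psi' : AKVSpace N M := ∑ i ∈ idx3 N M, ket N M i

/-- |Z| = Z⋆Z -/
def absZ (Z : AKVSpace N M →L[ℂ] AKVSpace N M) : AKVSpace N M →L[ℂ] AKVSpace N M :=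
  adjoint Z * Z

/-- hypotheses on the interference operator Z of the modified AKV model -/
def IsAKVZ (hM : 1 ≤ M) (Z : AKVSpace N M →L[ℂ] AKVSpace N M) : Prop :=
  Z = P3 N M * Z * P2 N M ∧
  Z * adjoint Z = P3 N M ∧
  Z (ket N M ⟨N - 1, by omega⟩) = ((Real.sqrt ((N : ℝ) - 1))⁻¹ : ℂ) • psi' N M ∧
  adjoint Z (ket N M ⟨N + 1, by omega⟩) = ((Real.sqrt ((N : ℝ) - 1))⁻¹ : ℂ) • psi N M

/-- the five Kraus operators -/
def kraus (Γ1m Γ1p Γ2m Γ2p Γ3m : ℝ) (Z : AKVSpace N M →L[ℂ] AKVSpace N M) :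
    Fin 5 → AKVSpace N M →L[ℂ] AKVSpace N M :=
  ![((Real.sqrt (2 * Γ1m) : ℝ) : ℂ) • ketbra N M (psi N M) (ket N M 1),
    ((Real.sqrt (2 * ((N : ℝ) - 1) * Γ2m) : ℝ) : ℂ) • Z,
    ((Real.sqrt (2 * Γ3m) : ℝ) : ℂ) • ketbra N M (ket N M 0) (psi' N M),
    ((Real.sqrt (2 * Γ1p) : ℝ) : ℂ) • ketbra N M (ket N M 1) (psi N M),
    ((Real.sqrt (2 * ((N : ℝ) - 1) * Γ2p) : ℝ) : ℂ) • adjoint Z]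

/-- the effective Hamiltonian -/
def Heff (γ1m γ1p γ2m γ2p γ3m : ℝ) (Z : AKVSpace N M →L[ℂ] AKVSpace N M) :
    AKVSpace N M →L[ℂ] AKVSpace N M :=
  (γ1p : ℂ) • ketbra N M (psi N M) (psi N M)
    - (((N : ℂ) - 1) * (γ1m : ℂ)) • ketbra N M (ket N M 1) (ket N M 1)
    + (((N : ℂ) - 1) * (γ2p : ℂ)) • P3 N M
    - (((N : ℂ) - 1) * (γ2m : ℂ)) • absZ N M Z
    - (γ3m : ℂ) • ketbra N M (psi' N M) (psi' N M)

/-- the predual GKSL generator ℒ_* of the modified AKV model -/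
def Lstar (Γ1m Γ1p Γ2m Γ2p Γ3m γ1m γ1p γ2m γ2p γ3m : ℝ)
    (Z ρ : AKVSpace N M →L[ℂ] AKVSpace N M) : AKVSpace N M →L[ℂ] AKVSpace N M :=
  -Complex.I • (Heff N M γ1m γ1p γ2m γ2p γ3m Z * ρ - ρ * Heff N M γ1m γ1p γ2m γ2p γ3m Z)
    + ∑ k : Fin 5,
        (kraus N M Γ1m Γ1p Γ2m Γ2p Γ3m Z k * ρ * adjoint (kraus N M Γ1m Γ1p Γ2m Γ2p Γ3m Z k)
          - (1 / 2 : ℂ) • (adjoint (kraus N M Γ1m Γ1p Γ2m Γ2p Γ3m Z k) *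
                kraus N M Γ1m Γ1p Γ2m Γ2p Γ3m Z k * ρ
              + ρ * (adjoint (kraus N M Γ1m Γ1p Γ2m Γ2p Γ3m Z k) *
                kraus N M Γ1m Γ1p Γ2m Γ2p Γ3m Z k)))

/-- a state: positive semidefinite with trace one -/
def IsState (ρ : AKVSpace N M →L[ℂ] AKVSpace N M) : Prop :=
  ρ.IsPositive ∧ LinearMap.trace ℂ (AKVSpace N M) ↑ρ = 1

/-- the interaction-free subspace W_D -/
def WD (Z : AKVSpace N M →L[ℂ] AKVSpace N M) : Submodule ℂ (AKVSpace N M) :=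
  (Submodule.span ℂ {ket N M 1, psi N M, psi' N M})ᗮ ⊓
    LinearMap.ker (Z : AKVSpace N M →ₗ[ℂ] AKVSpace N M) ⊓
      LinearMap.ker (adjoint Z : AKVSpace N M →ₗ[ℂ] AKVSpace N M)

/-- the subspace V = {e_0, e_1, ψ, ψ', Zψ, Z⋆ψ'}^⊥ -/
def Vsub (Z : AKVSpace N M →L[ℂ] AKVSpace N M) : Submodule ℂ (AKVSpace N M) :=
  (Submodule.span ℂ
    {ket N M 0, ket N M 1, psi N M, psi' N M, Z (psi N M), adjoint Z (psi' N M)})ᗮ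

/-- Im|Z| ∩ {ψ, Z⋆ψ'}^⊥ -/
def subA (Z : AKVSpace N M →L[ℂ] AKVSpace N M) : Submodule ℂ (AKVSpace N M) :=
  LinearMap.range (absZ N M Z : AKVSpace N M →ₗ[ℂ] AKVSpace N M) ⊓ (Submodule.span ℂ {psi N M, adjoint Z (psi' N M)})ᗮ

/-- ran P₃ ∩ {ψ', Zψ}^⊥ -/
def subB (Z : AKVSpace N M →L[ℂ] AKVSpace N M) : Submodule ℂ (AKVSpace N M) :=
  LinearMap.range (P3 N M : AKVSpace N M →ₗ[ℂ] AKVSpace N M) ⊓ (Submodule.span ℂ {psi' N M, Z (psi N M)})ᗮ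

/-- the orthogonal projection onto a subspace, as an operator on the whole space -/
def projOp (U : Submodule ℂ (AKVSpace N M)) : AKVSpace N M →L[ℂ] AKVSpace N M :=
  U.subtypeL ∘L U.orthogonalProjection


lemma inner_ket_ket (i j : Fin (N + M + 1)) :
    ⟪ket N M i, ket N M j⟫_ℂ = if j = i then 1 else 0 := by
  simp [ket, EuclideanSpace.inner_single_left, EuclideanSpace.single_apply]
  exact if_congr eq_comm rfl rfl

lemma ketbra_apply' (u v x : AKVSpace N M) : ketbra N M u v x = ⟪v, x⟫_ℂ • u := rfl

lemma P3_apply (x : AKVSpace N M) :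
    P3 N M x = ∑ i ∈ idx3 N M, ⟪ket N M i, x⟫_ℂ • ket N M i := by
  simp [P3, ContinuousLinearMap.sum_apply, ketbra_apply']

lemma P3_ket {i : Fin (N + M + 1)} (hi : i ∈ idx3 N M) :
    P3 N M (ket N M i) = ket N M i := by
  rw [P3_apply]
  rw [Finset.sum_eq_single i]
  · rw [inner_ket_ket, if_pos rfl, one_smul]
  · intro j hj hne
    rw [inner_ket_ket, if_neg (fun h => hne h.symm), zero_smul]
  · intro h; exact absurd hi h

lemma P3_P3 (x : AKVSpace N M) : P3 N M (P3 N M x) = P3 N M x := by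
  conv_lhs => rw [P3_apply N M x]
  rw [map_sum (P3 N M) (fun i => ⟪ket N M i, x⟫_ℂ • ket N M i) (idx3 N M)]
  conv_rhs => rw [P3_apply N M x]
  refine Finset.sum_congr rfl fun i hi => ?_
  rw [map_smul, P3_ket N M hi]

lemma mem_orth_pair {a b x : AKVSpace N M} (ha : ⟪a, x⟫_ℂ = 0) (hb : ⟪b, x⟫_ℂ = 0) :
    x ∈ (Submodule.span ℂ ({a, b} : Set (AKVSpace N M)))ᗮ := by
  rw [Submodule.mem_orthogonal]
  intro u hu
  induction hu using Submodule.span_induction with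
  | mem u hu =>
    rcases hu with h | h
    · subst h; exact ha
    · simp only [Set.mem_singleton_iff] at h; subst h; exact hb
  | zero => simp
  | add u v _ _ hu hv => rw [inner_add_left, hu, hv, add_zero]
  | smul c u _ hu => rw [inner_smul_left, hu, mul_zero]

lemma orth_pair_left {a b x : AKVSpace N M}
    (hx : x ∈ (Submodule.span ℂ ({a, b} : Set (AKVSpace N M)))ᗮ) : ⟪a, x⟫_ℂ = 0 :=
  (Submodule.mem_orthogonal _ x).1 hx a (Submodule.subset_span (by simp))

lemma orth_pair_right {a b x : AKVSpace N M}
    (hx : x ∈ (Submodule.span ℂ ({a, b} : Set (AKVSpace N M)))ᗮ) : ⟪b, x⟫_ℂ = 0 :=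
  (Submodule.mem_orthogonal _ x).1 hx b (Submodule.subset_span (by simp))

/-- In the modified AKV model, `Z` maps `Im|Z| ∩ {ψ, Z⋆ψ'}^⊥` into `ran P₃ ∩ {ψ', Zψ}^⊥`,
`Z⋆` maps `ran P₃ ∩ {ψ', Zψ}^⊥` into `Im|Z| ∩ {ψ, Z⋆ψ'}^⊥`, these restrictions are mutually
inverse and preserve inner products (hence are unitaries between the two subspaces), so the two
subspaces have the same dimension. -/
theorem Z_unitary_between_subspaces
    (N M : ℕ) (hN : 3 ≤ N) (hM1 : 1 ≤ M) (hM2 : M ≤ N - 1)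
    (Z : AKVSpace N M →L[ℂ] AKVSpace N M) (hZ : IsAKVZ N M hM1 Z) :
    (∀ u ∈ subA N M Z, Z u ∈ subB N M Z) ∧
    (∀ v ∈ subB N M Z, ContinuousLinearMap.adjoint Z v ∈ subA N M Z) ∧
    (∀ u ∈ subA N M Z, ContinuousLinearMap.adjoint Z (Z u) = u) ∧
    (∀ v ∈ subB N M Z, Z (ContinuousLinearMap.adjoint Z v) = v) ∧
    (∀ u ∈ subA N M Z, ∀ v ∈ subA N M Z, ⟪Z u, Z v⟫_ℂ = ⟪u, v⟫_ℂ) ∧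
    (∀ u ∈ subB N M Z, ∀ v ∈ subB N M Z,
      ⟪ContinuousLinearMap.adjoint Z u, ContinuousLinearMap.adjoint Z v⟫_ℂ = ⟪u, v⟫_ℂ) ∧
    Module.finrank ℂ (subA N M Z) = Module.finrank ℂ (subB N M Z) := by
  obtain ⟨hZ1, hZ2, -, -⟩ := hZ
  -- P3 absorbs Z on the left
  have hPZ : ∀ x, P3 N M (Z x) = Z x := by
    intro x
    rw [hZ1]
    simp only [ContinuousLinearMap.mul_apply]
    rw [P3_P3]
  -- Z Z† = P3 pointwise
  have hZZ : ∀ x, Z (ContinuousLinearMap.adjoint Z x) = P3 N M x := by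
    intro x; rw [← ContinuousLinearMap.mul_apply, hZ2]
  -- |Z| is idempotent
  have habs : ∀ x, absZ N M Z (absZ N M Z x) = absZ N M Z x := by
    intro x
    simp only [absZ, ContinuousLinearMap.mul_apply]
    rw [hZZ, hPZ]
  -- elements of the ranges are fixed points
  have hfixA : ∀ u ∈ LinearMap.range (absZ N M Z : AKVSpace N M →ₗ[ℂ] AKVSpace N M), absZ N M Z u = u := by
    rintro u ⟨w, rfl⟩; exact habs w
  have hfixB : ∀ v ∈ LinearMap.range (P3 N M : AKVSpace N M →ₗ[ℂ] AKVSpace N M), P3 N M v = v := by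
    rintro v ⟨w, rfl⟩; exact P3_P3 N M w
  -- the six statements
  have h1 : ∀ u ∈ subA N M Z, Z u ∈ subB N M Z := by
    rintro u ⟨hr, ho⟩
    have hu : ContinuousLinearMap.adjoint Z (Z u) = u := hfixA u hr
    refine ⟨⟨Z u, hPZ u⟩, mem_orth_pair N M ?_ ?_⟩
    · rw [← ContinuousLinearMap.adjoint_inner_left]
      exact orth_pair_right N M ho
    · rw [← ContinuousLinearMap.adjoint_inner_right Z, hu]
      exact orth_pair_left N M ho
  have h2 : ∀ v ∈ subB N M Z, ContinuousLinearMap.adjoint Z v ∈ subA N M Z := by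
    rintro v ⟨hr, ho⟩
    have hv : P3 N M v = v := hfixB v hr
    refine ⟨⟨ContinuousLinearMap.adjoint Z v, ?_⟩, mem_orth_pair N M ?_ ?_⟩
    · show ContinuousLinearMap.adjoint Z (Z (ContinuousLinearMap.adjoint Z v))
        = ContinuousLinearMap.adjoint Z v
      rw [hZZ, hv]
    · rw [ContinuousLinearMap.adjoint_inner_right]
      exact orth_pair_right N M ho
    · rw [ContinuousLinearMap.adjoint_inner_left, hZZ, hv]
      exact orth_pair_left N M ho
  have h3 : ∀ u ∈ subA N M Z, ContinuousLinearMap.adjoint Z (Z u) = u := by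
    rintro u ⟨hr, -⟩; exact hfixA u hr
  have h4 : ∀ v ∈ subB N M Z, Z (ContinuousLinearMap.adjoint Z v) = v := by
    rintro v ⟨hr, -⟩; rw [hZZ]; exact hfixB v hr
  have h5 : ∀ u ∈ subA N M Z, ∀ v ∈ subA N M Z, ⟪Z u, Z v⟫_ℂ = ⟪u, v⟫_ℂ := by
    intro u hu v hv
    rw [← ContinuousLinearMap.adjoint_inner_right Z, h3 v hv]
  have h6 : ∀ u ∈ subB N M Z, ∀ v ∈ subB N M Z,
      ⟪ContinuousLinearMap.adjoint Z u, ContinuousLinearMap.adjoint Z v⟫_ℂ = ⟪u, v⟫_ℂ := by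
    intro u hu v hv
    rw [ContinuousLinearMap.adjoint_inner_left, h4 v hv]
  refine ⟨h1, h2, h3, h4, h5, h6, ?_⟩
  -- the linear equivalence
  let f : subA N M Z →ₗ[ℂ] subB N M Z :=
    { toFun := fun u => ⟨Z u.1, h1 u.1 u.2⟩
      map_add' := fun a b => Subtype.ext (by simp)
      map_smul' := fun c a => Subtype.ext (by simp) }
  let g : subB N M Z →ₗ[ℂ] subA N M Z :=
    { toFun := fun v => ⟨ContinuousLinearMap.adjoint Z v.1, h2 v.1 v.2⟩
      map_add' := fun a b => Subtype.ext (by simp)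
      map_smul' := fun c a => Subtype.ext (by simp) }
  have e : subA N M Z ≃ₗ[ℂ] subB N M Z :=
    LinearEquiv.ofLinear f g
      (LinearMap.ext fun v => Subtype.ext (h4 v.1 v.2))
      (LinearMap.ext fun u => Subtype.ext (h3 u.1 u.2))
  exact e.finrank_eq

end AKV
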